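/- arXiv:math/0606339 — 3 statements merged into one kernel-verified Lean document; each statement's English description precedes it below -/
import Mathlib

section
/- For every f ∈ L²(ℝ) there exists a function F ∈ L²(Q) such that the partial sums F_N(x,t) = Σ_{|r|≤N} e^{−irt} f(x+πr) converge to F in the norm of L²(Q) as N → ∞, and the Parseval identity (1/(2π)) ∫₀^{2π} ∫₀^{π} |F(x,t)|² dx dt = ∫_ℝ |f(x)|² dx holds; consequently the Gel'fand transform f ↦ F is a linear isometry of L²(ℝ) into L²(Q). -/
open MeasureTheory Complex Real Set

/-- The measure `dx·dt/(2π)` on the rectangle `Q = [0,π] × [0,2π]`. -/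
noncomputable def muQ : Measure (ℝ × ℝ) :=
  (ENNReal.ofReal (2 * Real.pi))⁻¹ •
    ((volume.restrict (Set.Icc (0:ℝ) Real.pi)).prod
      (volume.restrict (Set.Icc (0:ℝ) (2 * Real.pi))))

/-- The symmetric partial sums `F_N(x,t) = Σ_{|r|≤N} e^{−irt} f(x+πr)` of the Gel'fand
transform of `f`. -/
noncomputable def gelfandPartial (f : ℝ → ℂ) (N : ℕ) : ℝ × ℝ → ℂ := fun q =>
  ∑ r ∈ Finset.Icc (-(N : ℤ)) (N : ℤ),
    Complex.exp (-Complex.I * (r : ℂ) * (q.2 : ℂ)) * f (q.1 + Real.pi * r)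


noncomputable def muP : Measure (ℝ × ℝ) :=
  ((volume.restrict (Set.Icc (0:ℝ) Real.pi)).prod
      (volume.restrict (Set.Icc (0:ℝ) (2 * Real.pi))))

noncomputable def gg (f : ℝ → ℂ) (r : ℤ) : ℝ × ℝ → ℂ := fun q =>
  Complex.exp (-Complex.I * (r : ℂ) * (q.2 : ℂ)) * f (q.1 + Real.pi * r)

lemma norm_gg (f : ℝ → ℂ) (r : ℤ) (q : ℝ × ℝ) : ‖gg f r q‖ = ‖f (q.1 + Real.pi * r)‖ := by
  rw [gg, norm_mul, Complex.norm_exp]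
  have : (-Complex.I * (r : ℂ) * (q.2 : ℂ)).re = 0 := by simp
  rw [this, Real.exp_zero, one_mul]

lemma sm_gg {f : ℝ → ℂ} (hsm : StronglyMeasurable f) (r : ℤ) :
    StronglyMeasurable (gg f r) := by
  apply StronglyMeasurable.mul
  · exact (Complex.continuous_exp.comp (by continuity)).stronglyMeasurable
  · exact hsm.comp_measurable ((measurable_fst.add_const _))

lemma memLp_shift {f : ℝ → ℂ} (hf : MemLp f 2 volume) (c : ℝ) :
    MemLp (fun x => f (x + c)) 2 volume :=
  hf.comp_measurePreserving (measurePreserving_add_right volume c)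

lemma memLp_gg_muP {f : ℝ → ℂ} (hsm : StronglyMeasurable f) (hf : MemLp f 2 volume) (r : ℤ) :
    MemLp (gg f r) 2 muP := by
  have h1 : MemLp (fun x => f (x + Real.pi * r)) 2 (volume.restrict (Set.Icc (0:ℝ) Real.pi)) :=
    (memLp_shift hf _).restrict _
  have h2 : MemLp (fun x => f (x + Real.pi * r)) 2
      ((volume (Set.Icc (0:ℝ) (2*Real.pi))) • volume.restrict (Set.Icc (0:ℝ) Real.pi)) :=
    h1.smul_measure (by simp [Real.volume_Icc, ENNReal.mul_eq_top])
  have hmp : MeasurePreserving (Prod.fst : ℝ × ℝ → ℝ) muP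
      ((volume (Set.Icc (0:ℝ) (2*Real.pi))) • volume.restrict (Set.Icc (0:ℝ) Real.pi)) := by
    refine ⟨measurable_fst, ?_⟩
    rw [muP, Measure.map_fst_prod]
    simp
  have h3 : MemLp (fun q : ℝ × ℝ => f (q.1 + Real.pi * r)) 2 muP :=
    h2.comp_measurePreserving hmp
  refine h3.of_le ((sm_gg hsm r).aestronglyMeasurable) ?_
  filter_upwards with q
  rw [norm_gg]

lemma integral_exp_Icc (c : ℂ) (hc : c ≠ 0) :
    ∫ t in Set.Icc (0:ℝ) (2*Real.pi), Complex.exp (c * t) =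
      (Complex.exp (c * (2*Real.pi)) - 1) / c := by
  rw [MeasureTheory.integral_Icc_eq_integral_Ioc,
    ← intervalIntegral.integral_of_le (by positivity), integral_exp_mul_complex hc]
  norm_num

lemma integral_exp_int_Icc (k : ℤ) (hk : k ≠ 0) :
    ∫ t in Set.Icc (0:ℝ) (2*Real.pi), Complex.exp (Complex.I * k * t) = 0 := by
  have hc : Complex.I * (k:ℂ) ≠ 0 := by
    simp [Complex.I_ne_zero, hk]
  rw [integral_exp_Icc _ hc]
  have h1 : Complex.exp (Complex.I * (k:ℂ) * (2 * (Real.pi:ℂ))) = 1 := by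
    have := Complex.exp_int_mul_two_pi_mul_I k
    rw [← this]
    congr 1
    push_cast
    ring
  rw [h1]
  simp

open scoped ComplexConjugate

lemma integrable_mul_conj {α : Type*} {m : MeasurableSpace α} {μ : Measure α} {u v : α → ℂ}
    (hu : MemLp u 2 μ) (hv : MemLp v 2 μ) :
    Integrable (fun x => conj (u x) * v x) μ := by
  have h := L2.integrable_inner (𝕜 := ℂ) (hu.toLp u) (hv.toLp v)
  refine h.congr ?_
  filter_upwards [hu.coeFn_toLp, hv.coeFn_toLp] with x h1 h2
  rw [RCLike.inner_apply, h1, h2, mul_comm]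

lemma integral_conj_gg {f : ℝ → ℂ} (hsm : StronglyMeasurable f) (hf : MemLp f 2 volume)
    (r s : ℤ) :
    ∫ q, conj (gg f r q) * gg f s q ∂muP =
      (∫ t in Set.Icc (0:ℝ) (2*Real.pi), Complex.exp (Complex.I * ((r:ℂ) - s) * t)) *
      ∫ x in Set.Icc (0:ℝ) Real.pi, conj (f (x + Real.pi * r)) * f (x + Real.pi * s) := by
  have hint : Integrable (fun q => conj (gg f r q) * gg f s q) muP :=
    integrable_mul_conj (memLp_gg_muP hsm hf r) (memLp_gg_muP hsm hf s)
  rw [muP] at hint ⊢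
  rw [MeasureTheory.integral_prod _ hint]
  have hpt : ∀ x t : ℝ, conj (gg f r (x,t)) * gg f s (x,t)
      = Complex.exp (Complex.I * ((r:ℂ)-s) * t) *
        (conj (f (x + Real.pi*r)) * f (x + Real.pi*s)) := by
    intro x t
    simp only [gg]
    rw [map_mul, ← Complex.exp_conj]
    calc Complex.exp (conj (-Complex.I * (r:ℂ) * (t:ℝ))) * conj (f (x + Real.pi*r)) *
          (Complex.exp (-Complex.I * (s:ℂ) * (t:ℝ)) * f (x + Real.pi*s))
        = Complex.exp (conj (-Complex.I * (r:ℂ) * (t:ℝ)) + (-Complex.I * (s:ℂ) * (t:ℝ))) *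
          (conj (f (x + Real.pi*r)) * f (x + Real.pi*s)) := by
          rw [Complex.exp_add]; ring
      _ = Complex.exp (Complex.I * ((r:ℂ)-s) * t) *
          (conj (f (x + Real.pi*r)) * f (x + Real.pi*s)) := by
          congr 1
          simp only [map_mul, Complex.conj_I, Complex.conj_ofReal, map_intCast, map_neg]
          ring
  simp_rw [hpt, MeasureTheory.integral_mul_const, MeasureTheory.integral_const_mul]

lemma muQ_eq : muQ = (ENNReal.ofReal (2 * Real.pi))⁻¹ • muP := rfl

lemma c2pi_ne_zero : ENNReal.ofReal (2 * Real.pi) ≠ 0 := by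
  rw [Ne, ENNReal.ofReal_eq_zero, not_le]
  positivity

lemma memLp_gg_muQ {f : ℝ → ℂ} (hsm : StronglyMeasurable f) (hf : MemLp f 2 volume) (r : ℤ) :
    MemLp (gg f r) 2 muQ := by
  rw [muQ_eq]
  exact (memLp_gg_muP hsm hf r).smul_measure (ENNReal.inv_ne_top.mpr c2pi_ne_zero)

noncomputable def aa (f : ℝ → ℂ) (r : ℤ) : ℝ :=
  ∫ x in Set.Icc (Real.pi * r) (Real.pi * r + Real.pi), ‖f x‖^2

lemma inner_ee {f : ℝ → ℂ} (hsm : StronglyMeasurable f) (hf : MemLp f 2 volume) (r s : ℤ) :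
    @inner ℂ _ _ ((memLp_gg_muQ hsm hf r).toLp (gg f r)) ((memLp_gg_muQ hsm hf s).toLp (gg f s))
      = (ENNReal.ofReal (2 * Real.pi))⁻¹.toReal •
        ((∫ t in Set.Icc (0:ℝ) (2*Real.pi), Complex.exp (Complex.I * ((r:ℂ) - s) * t)) *
        ∫ x in Set.Icc (0:ℝ) Real.pi, conj (f (x + Real.pi * r)) * f (x + Real.pi * s)) := by
  rw [L2.inner_def]
  rw [show ∫ q, @inner ℂ _ _ (((memLp_gg_muQ hsm hf r).toLp (gg f r)) q)
      (((memLp_gg_muQ hsm hf s).toLp (gg f s)) q) ∂muQ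
      = ∫ q, conj (gg f r q) * gg f s q ∂muQ from ?_]
  · rw [muQ_eq, integral_smul_measure, integral_conj_gg hsm hf r s]
  · refine integral_congr_ae ?_
    filter_upwards [(memLp_gg_muQ hsm hf r).coeFn_toLp, (memLp_gg_muQ hsm hf s).coeFn_toLp]
      with q h1 h2
    rw [RCLike.inner_apply, h1, h2, mul_comm]

lemma inner_ee_ne {f : ℝ → ℂ} (hsm : StronglyMeasurable f) (hf : MemLp f 2 volume) {r s : ℤ}
    (hrs : r ≠ s) :
    @inner ℂ _ _ ((memLp_gg_muQ hsm hf r).toLp (gg f r)) ((memLp_gg_muQ hsm hf s).toLp (gg f s))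
      = 0 := by
  rw [inner_ee hsm hf r s]
  have : (∫ t in Set.Icc (0:ℝ) (2*Real.pi), Complex.exp (Complex.I * ((r:ℂ) - s) * t)) = 0 := by
    have := integral_exp_int_Icc (r - s) (sub_ne_zero.mpr hrs)
    rw [← this]
    congr 1 with t
    push_cast
    ring_nf
  rw [this]
  simp

lemma inner_ee_diag {f : ℝ → ℂ} (hsm : StronglyMeasurable f) (hf : MemLp f 2 volume) (r : ℤ) :
    @inner ℂ _ _ ((memLp_gg_muQ hsm hf r).toLp (gg f r)) ((memLp_gg_muQ hsm hf r).toLp (gg f r))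
      = ((aa f r : ℝ) : ℂ) := by
  rw [inner_ee hsm hf r r]
  have hE : (∫ t in Set.Icc (0:ℝ) (2*Real.pi), Complex.exp (Complex.I * ((r:ℂ) - r) * t))
      = ((2 * Real.pi : ℝ) : ℂ) := by
    simp_rw [sub_self, mul_zero, zero_mul, Complex.exp_zero]
    rw [setIntegral_const, measureReal_def, Real.volume_Icc]
    rw [show (2 * Real.pi - 0 : ℝ) = 2 * Real.pi by ring,
      ENNReal.toReal_ofReal (by positivity), Complex.real_smul, mul_one]
  have hX : (∫ x in Set.Icc (0:ℝ) Real.pi, conj (f (x + Real.pi * r)) * f (x + Real.pi * r))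
      = ((aa f r : ℝ) : ℂ) := by
    have h1 : ∀ x : ℝ, conj (f (x + Real.pi * r)) * f (x + Real.pi * r)
        = ((‖f (x + Real.pi * r)‖^2 : ℝ) : ℂ) := by
      intro x
      rw [mul_comm, ← RCLike.inner_apply (𝕜 := ℂ), inner_self_eq_norm_sq_to_K]
      norm_cast
    have h2 : (∫ x in Set.Icc (0:ℝ) Real.pi, ‖f (x + Real.pi * r)‖^2) = aa f r := by
      have h3 := (measurePreserving_add_right volume (Real.pi * r)).setIntegral_preimage_emb
        (measurableEmbedding_addRight (Real.pi * r)) (fun y => ‖f y‖^2)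
        (Set.Icc (Real.pi * r) (Real.pi * r + Real.pi))
      rw [aa, ← h3]
      congr 1
      rw [Set.preimage_add_const_Icc]
      simp
    calc (∫ x in Set.Icc (0:ℝ) Real.pi, conj (f (x + Real.pi * r)) * f (x + Real.pi * r))
        = ∫ x in Set.Icc (0:ℝ) Real.pi, ((‖f (x + Real.pi * r)‖^2 : ℝ):ℂ) := by simp_rw [h1]
      _ = ((∫ x in Set.Icc (0:ℝ) Real.pi, ‖f (x + Real.pi * r)‖^2 : ℝ):ℂ) := integral_ofReal
      _ = ((aa f r : ℝ) : ℂ) := by rw [h2]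
  rw [hE, hX, ENNReal.toReal_inv, ENNReal.toReal_ofReal (by positivity), Complex.real_smul]
  push_cast
  have hpi : (Real.pi : ℂ) ≠ 0 := by
    simpa using Real.pi_ne_zero
  field_simp

lemma norm_ee_sq {f : ℝ → ℂ} (hsm : StronglyMeasurable f) (hf : MemLp f 2 volume) (r : ℤ) :
    ‖(memLp_gg_muQ hsm hf r).toLp (gg f r)‖^2 = aa f r := by
  rw [← inner_self_eq_norm_sq (𝕜 := ℂ), inner_ee_diag hsm hf r]
  simp

lemma pyth {f : ℝ → ℂ} (hsm : StronglyMeasurable f) (hf : MemLp f 2 volume) (S : Finset ℤ) :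
    ‖∑ r ∈ S, (memLp_gg_muQ hsm hf r).toLp (gg f r)‖^2 = ∑ r ∈ S, aa f r := by
  rw [← inner_self_eq_norm_sq (𝕜 := ℂ), sum_inner]
  have h1 : ∀ r ∈ S, @inner ℂ _ _ ((memLp_gg_muQ hsm hf r).toLp (gg f r))
      (∑ s ∈ S, (memLp_gg_muQ hsm hf s).toLp (gg f s)) = ((aa f r : ℝ) : ℂ) := by
    intro r hr
    rw [inner_sum]
    rw [Finset.sum_eq_single_of_mem r hr (fun s _ hs => inner_ee_ne hsm hf (Ne.symm hs))]
    exact inner_ee_diag hsm hf r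
  rw [Finset.sum_congr rfl h1, ← Complex.ofReal_sum]
  simp

lemma integrable_norm_sq {f : ℝ → ℂ} (hf : MemLp f 2 volume) :
    Integrable (fun x => ‖f x‖^2) volume := hf.norm.integrable_sq

lemma hasSum_aa {f : ℝ → ℂ} (hf : MemLp f 2 volume) :
    HasSum (aa f) (∫ x, ‖f x‖^2) := by
  have hdisj : Pairwise (Function.onFun Disjoint
      (fun r : ℤ => Set.Ioc (Real.pi * r) (Real.pi * r + Real.pi))) := by
    intro r s hrs
    simp only [Function.onFun]
    rw [Set.Ioc_disjoint_Ioc]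
    rcases lt_or_gt_of_ne hrs with h | h
    · have : (r:ℝ) + 1 ≤ s := by exact_mod_cast h
      calc min (Real.pi * r + Real.pi) (Real.pi * s + Real.pi) ≤ Real.pi * r + Real.pi :=
            min_le_left _ _
        _ ≤ Real.pi * s := by nlinarith [Real.pi_pos]
        _ ≤ max (Real.pi * r) (Real.pi * s) := le_max_right _ _
    · have : (s:ℝ) + 1 ≤ r := by exact_mod_cast h
      calc min (Real.pi * r + Real.pi) (Real.pi * s + Real.pi) ≤ Real.pi * s + Real.pi :=
            min_le_right _ _
        _ ≤ Real.pi * r := by nlinarith [Real.pi_pos]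
        _ ≤ max (Real.pi * r) (Real.pi * s) := le_max_left _ _
  have hcover : (⋃ r : ℤ, Set.Ioc (Real.pi * r) (Real.pi * r + Real.pi)) = Set.univ := by
    ext x
    simp only [Set.mem_iUnion, Set.mem_Ioc, Set.mem_univ, iff_true]
    have hpi := Real.pi_pos
    refine ⟨⌈x / Real.pi⌉ - 1, ?_, ?_⟩
    · push_cast
      have h2 : Real.pi * ((⌈x / Real.pi⌉ : ℝ) - 1) < Real.pi * (x / Real.pi) := by
        apply mul_lt_mul_of_pos_left _ hpi
        linarith [Int.ceil_lt_add_one (x / Real.pi)]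
      rw [mul_comm Real.pi (x / Real.pi), div_mul_cancel₀ x (ne_of_gt hpi)] at h2
      linarith
    · push_cast
      have h2 : Real.pi * (x / Real.pi) ≤ Real.pi * (⌈x / Real.pi⌉ : ℝ) :=
        mul_le_mul_of_nonneg_left (Int.le_ceil _) hpi.le
      rw [mul_comm Real.pi (x / Real.pi), div_mul_cancel₀ x (ne_of_gt hpi)] at h2
      linarith
  have h := hasSum_integral_iUnion (fun r : ℤ => measurableSet_Ioc) hdisj
    (by rw [hcover]; exact (integrable_norm_sq hf).integrableOn)
  rw [hcover, MeasureTheory.Measure.restrict_univ] at h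
  refine h.congr_fun ?_
  intro r
  rw [aa, MeasureTheory.integral_Icc_eq_integral_Ioc]

lemma summable_ee {f : ℝ → ℂ} (hsm : StronglyMeasurable f) (hf : MemLp f 2 volume) :
    Summable (fun r : ℤ => (memLp_gg_muQ hsm hf r).toLp (gg f r)) := by
  rw [summable_iff_vanishing_norm]
  intro ε hε
  obtain ⟨s, hs⟩ := summable_iff_vanishing_norm.mp (hasSum_aa hf).summable (ε^2) (by positivity)
  refine ⟨s, fun t ht => ?_⟩
  have h1 := hs t ht
  have h2 := pyth hsm hf t
  rw [Real.norm_eq_abs] at h1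
  have h3 : ∑ r ∈ t, aa f r < ε^2 := lt_of_le_of_lt (le_abs_self _) h1
  nlinarith [norm_nonneg (∑ r ∈ t, (memLp_gg_muQ hsm hf r).toLp (gg f r))]

lemma tendsto_Icc_finsets :
    Filter.Tendsto (fun N : ℕ => Finset.Icc (-(N:ℤ)) (N:ℤ)) Filter.atTop Filter.atTop := by
  apply Filter.tendsto_atTop_finset_of_monotone
  · intro M N h
    apply Finset.Icc_subset_Icc <;> [skip; exact_mod_cast h]
    simp only [neg_le_neg_iff]
    exact_mod_cast h
  · intro x
    refine ⟨x.natAbs, ?_⟩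
    rw [Finset.mem_Icc]
    constructor
    · rw [Int.natCast_natAbs]
      exact neg_abs_le x
    · rw [Int.natCast_natAbs]
      exact le_abs_self x

lemma coeFn_finset_sum {α : Type*} {m : MeasurableSpace α} {μ : Measure α}
    {ι : Type*} (s : Finset ι) (F : ι → Lp ℂ 2 μ) :
    ⇑(∑ i ∈ s, F i) =ᵐ[μ] fun x => ∑ i ∈ s, F i x := by
  classical
  induction s using Finset.induction_on with
  | empty => simp only [Finset.sum_empty]; exact Lp.coeFn_zero ℂ 2 μ
  | insert _ _ hni ih =>
    rename_i a s'
    rw [Finset.sum_insert hni]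
    filter_upwards [Lp.coeFn_add (F a) (∑ i ∈ s', F i), ih] with x hx1 hx2
    simp only [hx1, Pi.add_apply, hx2]
    rw [Finset.sum_insert hni]

lemma ae_shift {f f' : ℝ → ℂ} (h : f =ᵐ[volume] f') (r : ℤ) :
    (fun q : ℝ × ℝ => f (q.1 + Real.pi * r)) =ᵐ[muQ] fun q => f' (q.1 + Real.pi * r) := by
  have hnull : volume {x : ℝ | ¬ f x = f' x} = 0 := h
  obtain ⟨M, hMsub, hMm, hM0⟩ := exists_measurable_superset_of_null hnull
  have hpre : volume ((fun x => x + Real.pi * r) ⁻¹' M) = 0 := by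
    rw [(measurePreserving_add_right volume (Real.pi * r)).measure_preimage
      hMm.nullMeasurableSet]
    exact hM0
  refine (Filter.eventuallyEq_iff_exists_mem.mpr ⟨_, ?_, fun q hq => hq⟩ :)
  refine mem_ae_iff.mpr ?_
  apply measure_mono_null (t := ((fun x => x + Real.pi * r) ⁻¹' M) ×ˢ (Set.univ : Set ℝ))
  · intro q hq
    change ¬ (f (q.1 + Real.pi * r) = f' (q.1 + Real.pi * r)) at hq
    exact ⟨hMsub hq, trivial⟩
  · rw [muQ_eq, Measure.smul_apply, muP, Measure.prod_prod, smul_eq_mul]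
    have : volume.restrict (Set.Icc (0:ℝ) Real.pi) ((fun x => x + Real.pi * r) ⁻¹' M) = 0 :=
      le_antisymm (le_trans (Measure.restrict_le_self _) hpre.le) (zero_le)
    rw [this, zero_mul, mul_zero]

/-- for every `f ∈ L²(ℝ)` there is `F ∈ L²(Q)` such that the partial sums
`F_N` converge to `F` in `L²(Q)` and the Parseval identity
`∫_Q |F|² dμ_Q = ∫_ℝ |f|² dx` holds; hence the Gel'fand transform `f ↦ F` is a linear
isometry of `L²(ℝ)` into `L²(Q)`. -/
theorem gelfand_transform_isometry (f : ℝ → ℂ) (hf : MemLp f 2 volume) :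
    ∃ F : ℝ × ℝ → ℂ, MemLp F 2 muQ ∧
      Filter.Tendsto (fun N : ℕ => eLpNorm (fun q => gelfandPartial f N q - F q) 2 muQ)
        Filter.atTop (nhds 0) ∧
      ∫ q, ‖F q‖ ^ 2 ∂muQ = ∫ x : ℝ, ‖f x‖ ^ 2 := by
  classical
  have hsm : StronglyMeasurable (hf.1.mk f) := hf.1.stronglyMeasurable_mk
  have hff' : f =ᵐ[volume] hf.1.mk f := hf.1.ae_eq_mk
  have hf' : MemLp (hf.1.mk f) 2 volume := hf.ae_eq hff'
  set f' : ℝ → ℂ := hf.1.mk f with hf'def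
  set ee : ℤ → Lp ℂ 2 muQ := fun r => (memLp_gg_muQ hsm hf' r).toLp (gg f' r) with heedef
  obtain ⟨T, hT⟩ := summable_ee hsm hf'
  set S : ℕ → Lp ℂ 2 muQ := fun N => ∑ r ∈ Finset.Icc (-(N:ℤ)) (N:ℤ), ee r with hSdef
  have hStend : Filter.Tendsto S Filter.atTop (nhds T) := hT.comp tendsto_Icc_finsets
  refine ⟨⇑T, Lp.memLp T, ?_, ?_⟩
  · -- convergence
    have hae : ∀ N : ℕ, (fun q => gelfandPartial f N q - T q) =ᵐ[muQ] ⇑(S N - T) := by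
      intro N
      have h1 : ∀ᵐ q ∂muQ, ∀ r : ℤ, f (q.1 + Real.pi * r) = f' (q.1 + Real.pi * r) :=
        ae_all_iff.mpr fun r => ae_shift hff' r
      have h2 : ∀ᵐ q ∂muQ, ∀ r : ℤ, (ee r) q = gg f' r q :=
        ae_all_iff.mpr fun r => (memLp_gg_muQ hsm hf' r).coeFn_toLp
      filter_upwards [h1, h2, coeFn_finset_sum (Finset.Icc (-(N:ℤ)) (N:ℤ)) ee,
        Lp.coeFn_sub (S N) T] with q hq1 hq2 hq3 hq4
      rw [hq4]
      simp only [Pi.sub_apply]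
      congr 1
      rw [show (S N : ℝ × ℝ → ℂ) q = ∑ r ∈ Finset.Icc (-(N:ℤ)) (N:ℤ), (ee r) q from hq3]
      rw [gelfandPartial]
      refine Finset.sum_congr rfl fun r _ => ?_
      rw [hq2 r, gg, ← hq1 r]
    have heq : ∀ N, eLpNorm (fun q => gelfandPartial f N q - T q) 2 muQ
        = ENNReal.ofReal ‖S N - T‖ := by
      intro N
      rw [eLpNorm_congr_ae (hae N), Lp.norm_def,
        ENNReal.ofReal_toReal (Lp.eLpNorm_ne_top _)]
    have hnorm : Filter.Tendsto (fun N => ‖S N - T‖) Filter.atTop (nhds 0) := by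
      rw [← tendsto_iff_norm_sub_tendsto_zero]
      exact hStend
    have h0 : Filter.Tendsto (fun N => ENNReal.ofReal ‖S N - T‖) Filter.atTop (nhds 0) := by
      simpa using ENNReal.tendsto_ofReal hnorm
    exact h0.congr fun N => (heq N).symm
  · -- Parseval
    have hTnorm : ‖T‖^2 = ∫ x, ‖f x‖^2 := by
      have h1 : Filter.Tendsto (fun N => ‖S N‖^2) Filter.atTop (nhds (‖T‖^2)) :=
        (hStend.norm).pow 2
      have h2 : Filter.Tendsto (fun N => ‖S N‖^2) Filter.atTop (nhds (∫ x, ‖f' x‖^2)) := by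
        have h3 := (hasSum_aa hf').comp tendsto_Icc_finsets
        refine h3.congr fun N => ?_
        exact (pyth hsm hf' _).symm
      rw [tendsto_nhds_unique h1 h2]
      refine integral_congr_ae ?_
      filter_upwards [hff'] with x hx
      rw [hx]
    have h5 : @inner ℂ _ _ T T = ((∫ q, ‖T q‖^2 ∂muQ : ℝ) : ℂ) := by
      rw [L2.inner_def]
      have hpt : ∀ q, @inner ℂ _ _ (T q) (T q) = ((‖T q‖^2 : ℝ) : ℂ) := fun q => by
        rw [inner_self_eq_norm_sq_to_K]; norm_cast
      simp_rw [hpt]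
      exact integral_ofReal
    calc ∫ q, ‖T q‖^2 ∂muQ = RCLike.re (@inner ℂ _ _ T T) := by rw [h5]; simp
      _ = ‖T‖^2 := inner_self_eq_norm_sq T
      _ = ∫ x, ‖f x‖^2 := hTnorm
end

section
/- Let f ∈ L²(ℝ) and let F ∈ L²(Q) be its Gel'fand transform, i.e. the L²(Q)-limit of the partial sums Σ_{|r|≤N} e^{−irt} f(x+πr). Then for every r ∈ ℤ and for almost every x ∈ [0,π] one has the inversion formula f(x+πr) = (1/(2π)) ∫₀^{2π} e^{irt} F(x,t) dt. -/
open MeasureTheory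
open scoped ENNReal

lemma integral_exp_int (k : ℤ) :
    ∫ t in Set.Icc (0:ℝ) (2*Real.pi), Complex.exp (Complex.I * (k:ℂ) * (t:ℂ)) =
      if k = 0 then ((2*Real.pi : ℝ) : ℂ) else 0 := by
  have h2pi : (0:ℝ) ≤ 2*Real.pi := by positivity
  rw [integral_Icc_eq_integral_Ioc, ← intervalIntegral.integral_of_le h2pi]
  by_cases hk : k = 0
  · subst hk
    simp
  · rw [if_neg hk, integral_exp_mul_complex (by simp [Complex.I_ne_zero, hk])]
    have : Complex.I * (k:ℂ) * ((2*Real.pi : ℝ):ℂ) = (k:ℂ) * (2 * (Real.pi:ℂ) * Complex.I) := by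
      push_cast; ring
    rw [this, Complex.exp_int_mul_two_pi_mul_I]
    simp

lemma partial_coef (f : ℝ → ℂ) (r : ℤ) (N : ℕ) (hN : r.natAbs ≤ N) (x : ℝ) :
    ∫ t in Set.Icc (0:ℝ) (2*Real.pi),
      Complex.exp (Complex.I * (r:ℂ) * (t:ℂ)) * gelfandPartial f N (x, t)
      = ((2*Real.pi : ℝ) : ℂ) * f (x + Real.pi * r) := by
  have h1 : ∀ t : ℝ, Complex.exp (Complex.I * (r:ℂ) * (t:ℂ)) * gelfandPartial f N (x, t)
      = ∑ s ∈ Finset.Icc (-(N:ℤ)) (N:ℤ),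
          Complex.exp (Complex.I * ((r - s : ℤ):ℂ) * (t:ℂ)) * f (x + Real.pi * s) := by
    intro t
    simp only [gelfandPartial, Finset.mul_sum]
    refine Finset.sum_congr rfl fun s _ => ?_
    rw [← mul_assoc, ← Complex.exp_add]
    congr 2
    push_cast
    ring
  simp_rw [h1]
  rw [integral_finset_sum]
  · have h2 : ∀ s ∈ Finset.Icc (-(N:ℤ)) (N:ℤ),
        (∫ t in Set.Icc (0:ℝ) (2*Real.pi),
          Complex.exp (Complex.I * ((r - s : ℤ):ℂ) * (t:ℂ)) * f (x + Real.pi * s))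
        = (if r - s = 0 then ((2*Real.pi : ℝ) : ℂ) else 0) * f (x + Real.pi * s) := by
      intro s _
      rw [integral_mul_const, integral_exp_int]
    rw [Finset.sum_congr rfl h2, Finset.sum_eq_single r]
    · simp
    · intro s _ hs
      rw [if_neg (by omega), zero_mul]
    · intro hr
      exfalso
      apply hr
      simp only [Finset.mem_Icc]
      omega
  · intro s _
    exact (((Complex.continuous_exp.comp
      ((continuous_const.mul Complex.continuous_ofReal))).mul continuous_const)).integrableOn_Icc

lemma nnnorm_exp_I_int_mul (r : ℤ) (t : ℝ) :
    ‖Complex.exp (Complex.I * (r:ℂ) * (t:ℂ))‖₊ = 1 := by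
  have h : Complex.I * (r:ℂ) * (t:ℂ) = (((r : ℝ) * t : ℝ) : ℂ) * Complex.I := by
    push_cast; ring
  apply NNReal.coe_injective
  rw [coe_nnnorm, h, Complex.norm_exp_ofReal_mul_I, NNReal.coe_one]

/-- if `f ∈ L²(ℝ)` and `F ∈ L²(Q)` is its Gel'fand transform (the `L²(Q)`-limit
of the symmetric partial sums), then for every `r ∈ ℤ` and almost every `x ∈ [0,π]`,
`f(x+πr) = (1/(2π)) ∫₀^{2π} e^{irt} F(x,t) dt`. -/
theorem gelfand_inversion (f : ℝ → ℂ) (hf : MemLp f 2 volume)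
    (F : ℝ × ℝ → ℂ) (hF : MemLp F 2 muQ)
    (hconv : Filter.Tendsto (fun N : ℕ => eLpNorm (fun q => gelfandPartial f N q - F q) 2 muQ)
      Filter.atTop (nhds 0)) :
    ∀ r : ℤ, ∀ᵐ x ∂(volume.restrict (Set.Icc (0:ℝ) Real.pi)),
      f (x + Real.pi * r) =
        ((2 * Real.pi)⁻¹ : ℝ) *
          ∫ t in Set.Icc (0:ℝ) (2 * Real.pi), Complex.exp (Complex.I * (r : ℂ) * (t : ℂ)) * F (x, t) := by
  intro r
  have hπ : (0:ℝ) < Real.pi := Real.pi_pos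
  set c : ℝ≥0∞ := ENNReal.ofReal (2 * Real.pi) with hc_def
  have hc0 : c ≠ 0 := by
    simp only [hc_def, ne_eq, ENNReal.ofReal_eq_zero, not_le]
    positivity
  have hctop : c ≠ ⊤ := ENNReal.ofReal_ne_top
  set μ₁ : Measure ℝ := volume.restrict (Set.Icc (0:ℝ) Real.pi) with hμ₁
  set μ₂ : Measure ℝ := volume.restrict (Set.Icc (0:ℝ) (2*Real.pi)) with hμ₂
  set ν : Measure (ℝ × ℝ) := μ₁.prod μ₂ with hν
  have hνQ : ν = c • muQ := by
    rw [muQ, smul_smul, ENNReal.mul_inv_cancel hc0 hctop, one_smul]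
  haveI : IsFiniteMeasure μ₁ :=
    ⟨by rw [hμ₁, Measure.restrict_apply_univ, Real.volume_Icc]; exact ENNReal.ofReal_lt_top⟩
  haveI : IsFiniteMeasure μ₂ :=
    ⟨by rw [hμ₂, Measure.restrict_apply_univ, Real.volume_Icc]; exact ENNReal.ofReal_lt_top⟩
  have hFν : MemLp F 2 ν := by rw [hνQ]; exact hF.smul_measure hctop
  have hFint : Integrable F ν := hFν.integrable one_le_two
  have hFslice : ∀ᵐ x ∂μ₁, Integrable (fun t => F (x, t)) μ₂ := hFint.prod_right_ae
  -- quasi measure preserving translations of the first coordinate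
  have hqmp : ∀ a : ℝ, Measure.QuasiMeasurePreserving (fun p : ℝ × ℝ => p.1 + a) ν volume := by
    intro a
    refine ⟨measurable_fst.add_const a, Measure.AbsolutelyContinuous.mk fun s hs h0 => ?_⟩
    rw [Measure.map_apply (measurable_fst.add_const a) hs]
    have hpre : (fun p : ℝ × ℝ => p.1 + a) ⁻¹' s = ((fun x : ℝ => x + a) ⁻¹' s) ×ˢ Set.univ := by
      ext p; simp
    rw [hpre, hν, Measure.prod_prod]
    have h1 : μ₁ ((fun x : ℝ => x + a) ⁻¹' s) = 0 := by
      refine le_antisymm ?_ zero_le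
      calc μ₁ ((fun x : ℝ => x + a) ⁻¹' s)
          ≤ volume ((fun x : ℝ => x + a) ⁻¹' s) := Measure.restrict_le_self _
        _ = volume s := (measurePreserving_add_right volume a).measure_preimage
            hs.nullMeasurableSet
        _ = 0 := h0
    rw [h1, zero_mul]
  have hfNm : ∀ N : ℕ, AEStronglyMeasurable (gelfandPartial f N) ν := by
    intro N
    unfold gelfandPartial
    refine Finset.aestronglyMeasurable_fun_sum _ fun s _ => ?_
    refine AEStronglyMeasurable.mul ?_ ?_
    · exact (Complex.continuous_exp.comp
        (continuous_const.mul (Complex.continuous_ofReal.comp continuous_snd))).aestronglyMeasurable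
    · exact hf.1.comp_quasiMeasurePreserving (hqmp (Real.pi * s))
  have hGm : ∀ N : ℕ, AEStronglyMeasurable (fun q => gelfandPartial f N q - F q) ν :=
    fun N => (hfNm N).sub hFν.1
  -- measurability of the coefficient function
  have hgm : AEStronglyMeasurable
      (fun x => ∫ t, Complex.exp (Complex.I * (r:ℂ) * (t:ℂ)) * F (x, t) ∂μ₂) μ₁ := by
    have hm : AEStronglyMeasurable
        (fun z : ℝ × ℝ => Complex.exp (Complex.I * (r:ℂ) * (z.2:ℂ)) * F z) ν :=
      ((Complex.continuous_exp.comp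
        (continuous_const.mul (Complex.continuous_ofReal.comp continuous_snd))).aestronglyMeasurable).mul hFν.1
    simpa using hm.integral_prod_right'
  have hfr : AEStronglyMeasurable (fun x : ℝ => f (x + Real.pi * r)) μ₁ :=
    (hf.1.comp_quasiMeasurePreserving
      (measurePreserving_add_right volume (Real.pi * r)).quasiMeasurePreserving).restrict
  -- the function whose L¹ norm we show is zero
  set h : ℝ → ℂ := fun x => ((2*Real.pi : ℝ) : ℂ) * f (x + Real.pi * r)
      - ∫ t, Complex.exp (Complex.I * (r:ℂ) * (t:ℂ)) * F (x, t) ∂μ₂ with hh_def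
  set K : ℝ≥0∞ := c ^ (1 / (2:ℝ≥0∞)).toReal * (ν Set.univ) ^ ((1:ℝ)/1 - 1/2) with hK_def
  have hKtop : K ≠ ⊤ := by
    apply ENNReal.mul_ne_top
    · exact ENNReal.rpow_ne_top_of_nonneg (by positivity) hctop
    · exact ENNReal.rpow_ne_top_of_nonneg (by norm_num) (measure_ne_top _ _)
  have key : ∀ N : ℕ, r.natAbs ≤ N →
      (∫⁻ x, ‖h x‖₊ ∂μ₁) ≤ K * eLpNorm (fun q => gelfandPartial f N q - F q) 2 muQ := by
    intro N hN
    have hae : ∀ᵐ x ∂μ₁, (‖h x‖₊ : ℝ≥0∞)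
        ≤ ∫⁻ t, ‖gelfandPartial f N (x, t) - F (x, t)‖₊ ∂μ₂ := by
      filter_upwards [hFslice] with x hx
      have hcont : Continuous (fun t : ℝ =>
          Complex.exp (Complex.I * (r:ℂ) * (t:ℂ)) * gelfandPartial f N (x, t)) := by
        simp only [gelfandPartial]
        refine (Complex.continuous_exp.comp
          (continuous_const.mul Complex.continuous_ofReal)).mul ?_
        refine continuous_finset_sum _ fun s _ => ?_
        exact (Complex.continuous_exp.comp
          (continuous_const.mul Complex.continuous_ofReal)).mul continuous_const
      have hint1 : Integrable (fun t : ℝ =>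
          Complex.exp (Complex.I * (r:ℂ) * (t:ℂ)) * gelfandPartial f N (x, t)) μ₂ :=
        hcont.integrableOn_Icc
      have hint2 : Integrable (fun t : ℝ =>
          Complex.exp (Complex.I * (r:ℂ) * (t:ℂ)) * F (x, t)) μ₂ := by
        refine Integrable.mono hx ?_ ?_
        · exact ((Complex.continuous_exp.comp
            (continuous_const.mul Complex.continuous_ofReal)).aestronglyMeasurable).mul hx.1
        · refine Filter.Eventually.of_forall fun t => ?_
          rw [norm_mul]
          have : ‖Complex.exp (Complex.I * (r:ℂ) * (t:ℂ))‖ = 1 := by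
            have := nnnorm_exp_I_int_mul r t
            simpa [← coe_nnnorm] using congrArg NNReal.toReal this
          rw [this, one_mul]
      have heq : h x = ∫ t, Complex.exp (Complex.I * (r:ℂ) * (t:ℂ))
          * (gelfandPartial f N (x, t) - F (x, t)) ∂μ₂ := by
        have hp := partial_coef f r N hN x
        rw [hh_def]
        simp only
        rw [← hp, ← integral_sub hint1 hint2]
        congr 1
        ext t
        ring
      rw [heq]
      calc (‖∫ t, Complex.exp (Complex.I * (r:ℂ) * (t:ℂ))
            * (gelfandPartial f N (x, t) - F (x, t)) ∂μ₂‖₊ : ℝ≥0∞)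
          ≤ ∫⁻ t, ‖Complex.exp (Complex.I * (r:ℂ) * (t:ℂ))
            * (gelfandPartial f N (x, t) - F (x, t))‖₊ ∂μ₂ :=
            enorm_integral_le_lintegral_enorm _
        _ = ∫⁻ t, ‖gelfandPartial f N (x, t) - F (x, t)‖₊ ∂μ₂ := by
            refine lintegral_congr fun t => ?_
            rw [nnnorm_mul, nnnorm_exp_I_int_mul, one_mul]
    calc (∫⁻ x, ‖h x‖₊ ∂μ₁)
        ≤ ∫⁻ x, ∫⁻ t, ‖gelfandPartial f N (x, t) - F (x, t)‖₊ ∂μ₂ ∂μ₁ := lintegral_mono_ae hae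
      _ = ∫⁻ q, ‖gelfandPartial f N q - F q‖₊ ∂ν := (lintegral_prod _ (hGm N).enorm).symm
      _ = eLpNorm (fun q => gelfandPartial f N q - F q) 1 ν :=
          (eLpNorm_one_eq_lintegral_enorm (f := fun q => gelfandPartial f N q - F q)).symm
      _ ≤ eLpNorm (fun q => gelfandPartial f N q - F q) 2 ν
            * (ν Set.univ) ^ (1 / (1:ℝ≥0∞).toReal - 1 / (2:ℝ≥0∞).toReal) :=
          eLpNorm_le_eLpNorm_mul_rpow_measure_univ one_le_two (hGm N)
      _ = K * eLpNorm (fun q => gelfandPartial f N q - F q) 2 muQ := by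
          rw [hνQ, eLpNorm_smul_measure_of_ne_top (by norm_num : (2:ℝ≥0∞) ≠ ⊤), hK_def]
          have hν_univ : (c • muQ) Set.univ = ν Set.univ := by rw [← hνQ]
          rw [hν_univ]
          simp only [smul_eq_mul]
          norm_num
          ring
  have hlim : Filter.Tendsto
      (fun N : ℕ => K * eLpNorm (fun q => gelfandPartial f N q - F q) 2 muQ)
      Filter.atTop (nhds 0) := by
    have := ENNReal.Tendsto.const_mul hconv (Or.inr hKtop)
    simpa using this
  have hA : (∫⁻ x, ‖h x‖₊ ∂μ₁) = 0 := by
    have hle : (∫⁻ x, ‖h x‖₊ ∂μ₁) ≤ 0 :=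
      ge_of_tendsto hlim (Filter.eventually_atTop.2 ⟨r.natAbs, fun N hN => key N hN⟩)
    exact le_antisymm hle zero_le
  have hhm : AEMeasurable (fun x => (‖h x‖₊ : ℝ≥0∞)) μ₁ :=
    ((hfr.const_mul _).sub hgm).enorm
  have hae0 : ∀ᵐ x ∂μ₁, h x = 0 := by
    filter_upwards [(lintegral_eq_zero_iff' hhm).1 hA] with x hx
    simpa using hx
  filter_upwards [hae0] with x hx
  have h2 : ((2*Real.pi : ℝ) : ℂ) * f (x + Real.pi * r)
      = ∫ t, Complex.exp (Complex.I * (r:ℂ) * (t:ℂ)) * F (x, t) ∂μ₂ := by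
    have := sub_eq_zero.mp hx
    exact this
  have hne : ((2*Real.pi : ℝ) : ℂ) ≠ 0 := by
    exact_mod_cast (by positivity : (2*Real.pi : ℝ) ≠ 0)
  rw [← h2, Complex.ofReal_inv, inv_mul_cancel_left₀ hne]
end

section
/- Let U ⊆ ℂ be an open connected set, let μ₀ ∈ U be a real number, and let ρ : ℂ → ℂ be analytic and nonconstant on U with |ρ(μ₀)| = 1. Suppose that every μ ∈ U with |ρ(μ)| = 1 is real. Then ρ'(μ₀) ≠ 0. -/
open Complex Filter Topology

lemma mobius_im_eq (w w₀ : ℂ) (hw₀ : ‖w₀‖ = 1) (hw : w + w₀ ≠ 0) :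
    ((Complex.I * (w - w₀) / (w + w₀)).im = 0 ↔ ‖w‖ = 1) := by
  have hns : Complex.normSq (w + w₀) ≠ 0 := by
    simpa [Complex.normSq_eq_zero] using hw
  have hnw₀ : Complex.normSq w₀ = 1 := by
    rw [← Complex.sq_norm, hw₀]; norm_num
  have him : (Complex.I * (w - w₀) / (w + w₀)).im
      = (Complex.normSq w - 1) / Complex.normSq (w + w₀) := by
    rw [Complex.div_im]
    have h1 : (Complex.I * (w - w₀)).im = (w - w₀).re := by simp
    have h2 : (Complex.I * (w - w₀)).re = -(w - w₀).im := by simp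
    rw [h1, h2, div_sub_div_same]
    congr 1
    have := hnw₀
    simp only [Complex.normSq_apply, Complex.sub_re, Complex.sub_im, Complex.add_re,
      Complex.add_im] at this ⊢
    nlinarith [this]
  rw [him, div_eq_zero_iff]
  constructor
  · rintro (h | h)
    · have : Complex.normSq w = 1 := by linarith
      rw [Complex.norm_def, this, Real.sqrt_one]
    · exact absurd h hns
  · intro h
    left
    rw [← Complex.sq_norm, h]; norm_num



/-- Let `U ⊆ ℂ` be open and connected, `μ₀ ∈ U` real, and `ρ` analytic and
nonconstant on `U` with `|ρ(μ₀)| = 1`. If every `μ ∈ U` with `|ρ(μ)| = 1` is real, then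
`ρ'(μ₀) ≠ 0`. -/
theorem nonvanishing_derivative_on_real_level_set
    (U : Set ℂ) (hU : IsOpen U) (hconn : IsConnected U)
    (μ₀ : ℝ) (hμ₀ : (μ₀ : ℂ) ∈ U)
    (ρ : ℂ → ℂ) (hρ : AnalyticOnNhd ℂ ρ U)
    (hnc : ∃ z ∈ U, ∃ w ∈ U, ρ z ≠ ρ w)
    (habs : ‖ρ (μ₀ : ℂ)‖ = 1)
    (hlevel : ∀ μ ∈ U, ‖ρ μ‖ = 1 → ∃ x : ℝ, μ = (x : ℂ)) :
    deriv ρ (μ₀ : ℂ) ≠ 0 := by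
  intro hd
  set w₀ : ℂ := ρ (μ₀ : ℂ) with hw₀def
  have hw₀0 : w₀ ≠ 0 := by
    intro h
    rw [h] at habs; simp at habs
  have hρa : AnalyticAt ℂ ρ (μ₀ : ℂ) := hρ _ hμ₀
  have hden0 : ρ (μ₀ : ℂ) + w₀ ≠ 0 := by
    rw [← hw₀def, ← two_mul]
    exact mul_ne_zero two_ne_zero hw₀0
  set q : ℂ → ℂ := fun z => Complex.I * (ρ z - w₀) / (ρ z + w₀) with hqdef
  -- q is analytic at μ₀
  have hqa : AnalyticAt ℂ q (μ₀ : ℂ) :=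
    ((analyticAt_const.mul (hρa.sub analyticAt_const)).div
      (hρa.add analyticAt_const) hden0)
  have hq0 : q (μ₀ : ℂ) = 0 := by simp [hqdef, ← hw₀def]
  -- derivative of q vanishes at μ₀
  have hρd : HasDerivAt ρ 0 (μ₀ : ℂ) := by
    have := hρa.differentiableAt.hasDerivAt
    rwa [hd] at this
  have hqd : HasDerivAt q 0 (μ₀ : ℂ) := by
    have hnum : HasDerivAt (fun z => Complex.I * (ρ z - w₀)) (Complex.I * 0) (μ₀ : ℂ) :=
      (hρd.sub_const w₀).const_mul Complex.I
    have hden : HasDerivAt (fun z => ρ z + w₀) 0 (μ₀ : ℂ) := hρd.add_const w₀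
    have := hnum.div hden hden0
    simp at this; exact this
  have hq' : deriv q (μ₀ : ℂ) = 0 := hqd.deriv
  -- q is not eventually zero near μ₀
  have hden_ev : ∀ᶠ z in 𝓝 (μ₀ : ℂ), ρ z + w₀ ≠ 0 := by
    have : ContinuousAt (fun z => ρ z + w₀) (μ₀ : ℂ) :=
      (hρa.continuousAt).add continuousAt_const
    exact this.eventually_ne hden0
  have hqne : ¬ (∀ᶠ z in 𝓝 (μ₀ : ℂ), q z = 0) := by
    intro hev
    have hev' : ∀ᶠ z in 𝓝 (μ₀ : ℂ), ρ z = w₀ := by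
      filter_upwards [hev, hden_ev] with z h1 h2
      rw [hqdef] at h1
      simp only at h1
      rcases div_eq_zero_iff.mp h1 with h | h
      · rcases mul_eq_zero.mp h with h' | h'
        · exact absurd h' Complex.I_ne_zero
        · exact sub_eq_zero.mp h'
      · exact absurd h h2
    have heq : Set.EqOn ρ (fun _ => w₀) U :=
      hρ.eqOn_of_preconnected_of_eventuallyEq analyticOnNhd_const
        hconn.isPreconnected hμ₀ hev'
    obtain ⟨z, hz, w, hw, hne⟩ := hnc
    exact hne ((heq hz).trans (heq hw).symm)
  -- the order n of q at μ₀ is a natural number ≥ 2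
  have hot : analyticOrderAt q (μ₀ : ℂ) ≠ ⊤ := by
    intro h
    rw [analyticOrderAt_eq_top] at h; exact hqne h
  obtain ⟨n, hn⟩ := WithTop.ne_top_iff_exists.mp hot
  have hn1 : 2 ≤ n := by
    by_contra hlt
    push_neg at hlt
    interval_cases n
    · obtain ⟨g, hg, hg0, hqg⟩ := (hqa.analyticOrderAt_eq_natCast (n := 0)).mp hn.symm
      have := hqg.self_of_nhds
      simp [hq0] at this
      exact hg0 this.symm
    · obtain ⟨g, hg, hg0, hqg⟩ := (hqa.analyticOrderAt_eq_natCast (n := 1)).mp hn.symm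
      have hde : deriv q (μ₀ : ℂ) = deriv (fun z => (z - (μ₀ : ℂ)) ^ 1 • g z) (μ₀ : ℂ) :=
        Filter.EventuallyEq.deriv_eq hqg
      have hgd : HasDerivAt (fun z : ℂ => (z - (μ₀ : ℂ)) ^ 1 • g z)
          (g (μ₀ : ℂ)) (μ₀ : ℂ) := by
        have h1 : HasDerivAt (fun z : ℂ => (z - (μ₀ : ℂ))) 1 (μ₀ : ℂ) :=
          (hasDerivAt_id _).sub_const _
        have h2 := hg.differentiableAt.hasDerivAt
        have := h1.mul h2
        simp at this ⊢; exact this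
      rw [hde, hgd.deriv] at hq'
      exact hg0 hq'
  obtain ⟨g, hg, hg0, hqg⟩ := (hqa.analyticOrderAt_eq_natCast (n := n)).mp hn.symm
  have hnne : (n : ℂ) ≠ 0 := Nat.cast_ne_zero.mpr (by omega : n ≠ 0)
  -- an analytic n-th root r of g near μ₀
  set c : ℂ := Complex.exp ((n : ℂ)⁻¹ * Complex.log (g (μ₀ : ℂ))) with hcdef
  set r : ℂ → ℂ := fun z =>
    c * Complex.exp ((n : ℂ)⁻¹ * Complex.log (g z / g (μ₀ : ℂ))) with hrdef
  have hra : AnalyticAt ℂ r (μ₀ : ℂ) := by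
    apply analyticAt_const.mul
    apply AnalyticAt.cexp
    apply analyticAt_const.mul
    apply AnalyticAt.clog (hg.div analyticAt_const hg0)
    simp only [Pi.div_apply, div_self hg0]
    exact Complex.one_mem_slitPlane
  have hrμ : r (μ₀ : ℂ) = c := by
    simp [hrdef, div_self hg0, Complex.log_one]
  have hr0 : r (μ₀ : ℂ) ≠ 0 := by
    rw [hrμ, hcdef]; exact Complex.exp_ne_zero _
  have hgne : ∀ᶠ z in 𝓝 (μ₀ : ℂ), g z ≠ 0 := hg.continuousAt.eventually_ne hg0
  have hrpow : ∀ᶠ z in 𝓝 (μ₀ : ℂ), r z ^ n = g z := by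
    filter_upwards [hgne] with z hz
    rw [hrdef]
    simp only
    rw [mul_pow, ← Complex.exp_nat_mul, ← Complex.exp_nat_mul]
    have e1 : (n : ℂ) * ((n : ℂ)⁻¹ * Complex.log (g (μ₀ : ℂ))) = Complex.log (g (μ₀ : ℂ)) := by
      field_simp
    have e2 : (n : ℂ) * ((n : ℂ)⁻¹ * Complex.log (g z / g (μ₀ : ℂ)))
        = Complex.log (g z / g (μ₀ : ℂ)) := by field_simp
    rw [e1, e2, Complex.exp_log hg0, Complex.exp_log (div_ne_zero hz hg0)]
    field_simp
  -- ψ : the analytic n-th root of q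
  set ψ : ℂ → ℂ := fun z => (z - (μ₀ : ℂ)) * r z with hψdef
  have hψ0 : ψ (μ₀ : ℂ) = 0 := by simp [hψdef]
  have hψq : ∀ᶠ z in 𝓝 (μ₀ : ℂ), q z = ψ z ^ n := by
    filter_upwards [hqg, hrpow] with z h1 h2
    rw [h1, smul_eq_mul, ← h2]
    exact (mul_pow _ _ _).symm
  have hψa : AnalyticAt ℂ ψ (μ₀ : ℂ) :=
    ((analyticAt_id.sub analyticAt_const).mul hra)
  have hψd' : HasDerivAt ψ (r (μ₀ : ℂ)) (μ₀ : ℂ) := by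
    have h1 : HasDerivAt (fun z : ℂ => z - (μ₀ : ℂ)) 1 (μ₀ : ℂ) :=
      (hasDerivAt_id _).sub_const _
    have h2 := hra.differentiableAt.hasDerivAt
    have := h1.mul h2
    simp at this; exact this
  have hstrict : HasStrictDerivAt ψ (r (μ₀ : ℂ)) (μ₀ : ℂ) := by
    obtain ⟨p, hp⟩ := hψa
    have hs := hp.hasStrictDerivAt
    have heq : p 1 (fun _ => 1) = r (μ₀ : ℂ) := hs.hasDerivAt.unique hψd'
    rwa [heq] at hs
  -- local inverse of ψ
  set hsf := hstrict.hasStrictFDerivAt_equiv hr0 with hsfdef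
  set F : ℂ → ℂ := hsf.localInverse ψ _ (μ₀ : ℂ) with hFdef
  have hFr : ∀ᶠ y in 𝓝 (0 : ℂ), ψ (F y) = y := by
    have := hsf.eventually_right_inverse
    rwa [hψ0] at this
  have hFc : ContinuousAt F (0 : ℂ) := by
    have := hsf.localInverse_continuousAt
    rwa [hψ0] at this
  have hF0 : F (0 : ℂ) = (μ₀ : ℂ) := by
    have := hsf.localInverse_apply_image
    rwa [hψ0] at this
  -- choice of direction E
  obtain ⟨E, hE0, hEn, hEr⟩ : ∃ E : ℂ, E ≠ 0 ∧ (E ^ n).im = 0 ∧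
      ((starRingEnd ℂ) E * r (μ₀ : ℂ)).im ≠ 0 := by
    by_cases hcase : (r (μ₀ : ℂ)).im = 0
    · refine ⟨Complex.exp ((Real.pi / n : ℝ) * Complex.I), Complex.exp_ne_zero _, ?_, ?_⟩
      · rw [← Complex.exp_nat_mul]
        have : (n : ℂ) * ((Real.pi / n : ℝ) * Complex.I) = (Real.pi : ℂ) * Complex.I := by
          push_cast
          field_simp
        rw [this, Complex.exp_pi_mul_I]
        simp
      · have hconj : (starRingEnd ℂ) (Complex.exp ((Real.pi / n : ℝ) * Complex.I))
            = Complex.exp (((-(Real.pi / n) : ℝ)) * Complex.I) := by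
          rw [← Complex.exp_conj]
          congr 1
          simp [Complex.conj_I]
        have hre : r (μ₀ : ℂ) = (((r (μ₀ : ℂ)).re : ℝ) : ℂ) := by
          apply Complex.ext <;> simp [hcase]
        have hsin : Real.sin (Real.pi / n) ≠ 0 := by
          apply ne_of_gt
          apply Real.sin_pos_of_pos_of_lt_pi
          · exact div_pos Real.pi_pos (by exact_mod_cast (by omega : 0 < n))
          · apply div_lt_self Real.pi_pos
            exact_mod_cast (by omega : 1 < n)
        have hrre : (r (μ₀ : ℂ)).re ≠ 0 := by
          intro h
          apply hr0
          apply Complex.ext <;> simp [h, hcase]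
        rw [hconj, hre, Complex.mul_im, Complex.exp_ofReal_mul_I_im]
        simp only [Complex.ofReal_im, Complex.ofReal_re, mul_zero, zero_add]
        rw [Real.sin_neg]
        exact mul_ne_zero (neg_ne_zero.mpr hsin) hrre
    · exact ⟨1, one_ne_zero, by simp, by simpa using hcase⟩
  -- the approach path
  set T : ℝ → ℂ := fun t => (t : ℂ) * E with hTdef
  have hT : Filter.Tendsto T (𝓝[≠] (0 : ℝ)) (𝓝 (0 : ℂ)) := by
    have hc : Continuous T := Complex.continuous_ofReal.mul continuous_const
    have := hc.tendsto (0 : ℝ)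
    simp only [hTdef, Complex.ofReal_zero, zero_mul] at this
    exact this.mono_left nhdsWithin_le_nhds
  have hFT : Filter.Tendsto (fun t => F (T t)) (𝓝[≠] (0 : ℝ)) (𝓝 (μ₀ : ℂ)) := by
    have h1 : Filter.Tendsto F (𝓝 (0 : ℂ)) (𝓝 (μ₀ : ℂ)) := by
      have := hFc.tendsto
      rwa [hF0] at this
    exact h1.comp hT
  -- the key eventual fact
  have hkey : ∀ᶠ t in 𝓝[≠] (0 : ℝ), ((starRingEnd ℂ) E * r (F (T t))).im = 0 := by
    have hev1 : ∀ᶠ t in 𝓝[≠] (0 : ℝ), ψ (F (T t)) = T t := hT.eventually hFr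
    have hev2 := hFT.eventually hψq
    have hev3 : ∀ᶠ t in 𝓝[≠] (0 : ℝ), F (T t) ∈ U :=
      hFT.eventually (hU.mem_nhds hμ₀)
    have hev4 := hFT.eventually hden_ev
    have hev5 : ∀ᶠ t in 𝓝[≠] (0 : ℝ), t ≠ 0 := eventually_mem_nhdsWithin
    filter_upwards [hev1, hev2, hev3, hev4, hev5] with t h1 h2 h3 h4 h5
    set z := F (T t) with hzdef
    have hqz : q z = ((t : ℂ)) ^ n * E ^ n := by
      rw [h2, h1, hTdef]
      simp only
      rw [mul_pow]
    have him0 : (q z).im = 0 := by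
      rw [hqz]
      have htim : ((t : ℂ) ^ n).im = 0 := by
        rw [← Complex.ofReal_pow]; exact Complex.ofReal_im _
      rw [Complex.mul_im, htim, hEn]
      ring
    have habs1 : ‖ρ z‖ = 1 := by
      rw [hqdef] at him0
      exact (mobius_im_eq (ρ z) w₀ habs h4).mp him0
    obtain ⟨x, hx⟩ := hlevel z h3 habs1
    have hzne : z ≠ (μ₀ : ℂ) := by
      intro h
      rw [h, hψ0] at h1
      rcases mul_eq_zero.mp h1.symm with h' | h'
      · exact h5 (by exact_mod_cast h')
      · exact hE0 h'
    have hsne : (x - μ₀ : ℝ) ≠ 0 := by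
      intro h
      apply hzne
      rw [hx]
      have : x = μ₀ := by linarith
      rw [this]
    have hcne : ((x - μ₀ : ℝ) : ℂ) ≠ 0 := by exact_mod_cast hsne
    have hψz : ((x - μ₀ : ℝ) : ℂ) * r z = (t : ℂ) * E := by
      have h1' : (z - (μ₀ : ℂ)) * r z = (t : ℂ) * E := h1
      rw [Complex.ofReal_sub, ← hx]
      exact h1'
    have hrz : r z = (((x - μ₀ : ℝ)) : ℂ)⁻¹ * ((t : ℂ) * E) := by
      rw [← hψz, inv_mul_cancel_left₀ hcne]
    rw [hrz]
    have heq2 : (starRingEnd ℂ) E * ((((x - μ₀ : ℝ)) : ℂ)⁻¹ * ((t : ℂ) * E))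
        = (((x - μ₀ : ℝ)) : ℂ)⁻¹ * ((t : ℂ) * ((Complex.normSq E : ℝ) : ℂ)) := by
      rw [← Complex.mul_conj]
      ring
    rw [heq2, ← Complex.ofReal_inv, ← Complex.ofReal_mul, ← Complex.ofReal_mul]
    exact Complex.ofReal_im _
  -- pass to the limit
  have hlim : Filter.Tendsto (fun t => ((starRingEnd ℂ) E * r (F (T t))).im)
      (𝓝[≠] (0 : ℝ)) (𝓝 (((starRingEnd ℂ) E * r (μ₀ : ℂ)).im)) := by
    have h1 : Filter.Tendsto (fun t => r (F (T t))) (𝓝[≠] (0 : ℝ)) (𝓝 (r (μ₀ : ℂ))) :=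
      (hra.continuousAt.tendsto).comp hFT
    have h2 : Filter.Tendsto (fun t => (starRingEnd ℂ) E * r (F (T t)))
        (𝓝[≠] (0 : ℝ)) (𝓝 ((starRingEnd ℂ) E * r (μ₀ : ℂ))) :=
      tendsto_const_nhds.mul h1
    exact (Complex.continuous_im.tendsto _).comp h2
  have hzero : Filter.Tendsto (fun t => ((starRingEnd ℂ) E * r (F (T t))).im)
      (𝓝[≠] (0 : ℝ)) (𝓝 (0 : ℝ)) :=
    Filter.Tendsto.congr' (hkey.mono fun t ht => ht.symm) tendsto_const_nhds
  exact hEr (tendsto_nhds_unique hlim hzero)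
end
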